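/- Let G₀ be a K_{h,h}-free graph and let G be its blowup obtained by replacing each vertex with a clique of size t = s/(2h) (complete bipartite joins between blobs corresponding to edges of G₀, no edges between blobs corresponding to non-edges). Then G is K_{s,s}-free. -/

import Mathlib

open SimpleGraph

/-- `G` contains no (not necessarily induced) subgraph isomorphic to `K_{s,s}`. -/
def KssFree {V : Type*} (s : ℕ) (G : SimpleGraph V) : Prop :=
  ∀ f : completeBipartiteGraph (Fin s) (Fin s) →g G, ¬ Function.Injective f

/-- The blowup of `G₀` where every vertex is replaced by a clique ("blob") of size `t`,
with complete joins between blobs corresponding to edges of `G₀`. -/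
def blowup {W : Type*} (G₀ : SimpleGraph W) (t : ℕ) : SimpleGraph (W × Fin t) where
  Adj x y := (x.1 = y.1 ∧ x.2 ≠ y.2) ∨ G₀.Adj x.1 y.1
  symm := by
    constructor
    rintro x y (⟨h1, h2⟩ | h)
    · exact Or.inl ⟨h1.symm, h2.symm⟩
    · exact Or.inr h.symm
  loopless := by
    constructor
    rintro x (⟨h1, h2⟩ | h)
    · exact h2 rfl
    · exact G₀.irrefl h

theorem stmt_7 {W : Type*} (G₀ : SimpleGraph W) (h t s : ℕ) (hh : 0 < h) (ht : 0 < t)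
    (hs : s = 2 * h * t) (hfree : KssFree h G₀) :
    KssFree s (blowup G₀ t) := by
  classical
  intro f hf
  -- blobs hit by the left and right sides
  set fL : Fin s → W := fun i => (f (Sum.inl i)).1 with hfL
  set fR : Fin s → W := fun i => (f (Sum.inr i)).1 with hfR
  set L : Finset W := Finset.univ.image fL with hL
  set R : Finset W := Finset.univ.image fR with hR
  have hfiber : ∀ (g : Fin s → (W × Fin t)) (hg : Function.Injective g) (w : W),
      ({a ∈ (Finset.univ : Finset (Fin s)) | (g a).1 = w}).card ≤ t := by
    intro g hg w
    have : Set.InjOn (fun a => (g a).2)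
        ({a ∈ (Finset.univ : Finset (Fin s)) | (g a).1 = w} : Finset (Fin s)) := by
      intro a ha b hb hab
      simp only [Finset.coe_filter, Set.mem_setOf_eq] at ha hb
      exact hg (Prod.ext (ha.2.trans hb.2.symm) hab)
    calc ({a ∈ (Finset.univ : Finset (Fin s)) | (g a).1 = w}).card
        = (({a ∈ (Finset.univ : Finset (Fin s)) | (g a).1 = w}).image
            (fun a => (g a).2)).card := (Finset.card_image_of_injOn this).symm
      _ ≤ (Finset.univ : Finset (Fin t)).card := Finset.card_le_card (Finset.subset_univ _)
      _ = t := by simp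
  have hcardL : 2 * h ≤ L.card := by
    have hinj : Function.Injective (fun i : Fin s => f (Sum.inl i)) :=
      fun a b hab => Sum.inl_injective (hf hab)
    have := Finset.card_le_mul_card_image (f := fL) Finset.univ t
      (fun b _ => hfiber _ hinj b)
    have hsu : (Finset.univ : Finset (Fin s)).card = 2 * h * t := by simp [hs]
    rw [hsu] at this
    rw [mul_comm (2 * h) t] at this
    exact Nat.le_of_mul_le_mul_left this ht
  have hcardR : 2 * h ≤ R.card := by
    have hinj : Function.Injective (fun i : Fin s => f (Sum.inr i)) :=
      fun a b hab => Sum.inr_injective (hf hab)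
    have := Finset.card_le_mul_card_image (f := fR) Finset.univ t
      (fun b _ => hfiber _ hinj b)
    have hsu : (Finset.univ : Finset (Fin s)).card = 2 * h * t := by simp [hs]
    rw [hsu] at this
    rw [mul_comm (2 * h) t] at this
    exact Nat.le_of_mul_le_mul_left this ht
  -- choose h blobs from the left and h disjoint blobs from the right
  obtain ⟨A, hAL, hA⟩ := Finset.exists_subset_card_eq
    (show h ≤ L.card from le_trans (by omega) hcardL)
  have hRA : h ≤ (R \ A).card := by
    have := Finset.le_card_sdiff A R
    omega
  obtain ⟨B, hBR, hB⟩ := Finset.exists_subset_card_eq hRA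
  -- equivalences
  have eA : Fin h ≃ A := (A.equivFinOfCardEq hA).symm
  have eB : Fin h ≃ B := (B.equivFinOfCardEq hB).symm
  -- adjacency in G₀ between any member of A and any member of B
  have hadj : ∀ a ∈ A, ∀ b ∈ B, G₀.Adj a b := by
    intro a ha b hb
    obtain ⟨i, _, hi⟩ := Finset.mem_image.1 (hAL ha)
    obtain ⟨j, _, hj⟩ := Finset.mem_image.1 ((Finset.mem_sdiff.1 (hBR hb)).1)
    have hedge : (completeBipartiteGraph (Fin s) (Fin s)).Adj (Sum.inl i) (Sum.inr j) := by
      simp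
    have := f.map_rel hedge
    rcases this with ⟨h1, _⟩ | h2
    · exfalso
      have : a = b := by rw [← hi, ← hj]; exact h1
      have hbA : b ∉ A := (Finset.mem_sdiff.1 (hBR hb)).2
      exact hbA (this ▸ ha)
    · rw [← hi, ← hj]; exact h2
  -- build the K_{h,h} homomorphism into G₀
  let φ : Fin h ⊕ Fin h → W := Sum.elim (fun i => (eA i : W)) (fun j => (eB j : W))
  have hABdisj : ∀ a ∈ A, ∀ b ∈ B, a ≠ b := by
    intro a ha b hb hab
    exact (Finset.mem_sdiff.1 (hBR hb)).2 (hab ▸ ha)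
  have hφmap : ∀ {u v}, (completeBipartiteGraph (Fin h) (Fin h)).Adj u v → G₀.Adj (φ u) (φ v) := by
    rintro (i | i) (j | j) huv <;> simp at huv
    · exact hadj _ (eA i).2 _ (eB j).2
    · exact (hadj _ (eA j).2 _ (eB i).2).symm
  let g : completeBipartiteGraph (Fin h) (Fin h) →g G₀ := ⟨φ, hφmap⟩
  apply hfree g
  rintro (i | i) (j | j) hij <;> simp only [g, φ, Sum.elim_inl, Sum.elim_inr] at hij
  · exact congrArg Sum.inl (eA.injective (Subtype.ext hij))
  · exact absurd hij (hABdisj _ (eA i).2 _ (eB j).2)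
  · exact absurd hij.symm (hABdisj _ (eA j).2 _ (eB i).2)
  · exact congrArg Sum.inr (eB.injective (Subtype.ext hij))
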